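/- arXiv:2511.01263 — 3 statements merged into one kernel-verified Lean document; each statement's English description precedes it below -/
import Mathlib

section
/- Let n ≥ 1 and d ≥ 1 be integers, and let d₁, …, dₙ be real numbers with dᵢ ≥ 1 for every i and with d_j > 1 for at least one index j. Then the (finite) cardinality of the set {(m₁, …, mₙ) ∈ ℕⁿ : m₁d₁ + ⋯ + mₙdₙ ≤ d} is at most C(n+d, n) − C(n+d−2, d−1), where C(·,·) denotes the binomial coefficient. -/
lemma lenAT_step (k n : ℕ) : (List.Nat.antidiagonalTuple (k+1) n).length
    = ∑ i ∈ Finset.range (n+1), (List.Nat.antidiagonalTuple k (n - i)).length := by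
  rw [List.Nat.antidiagonalTuple, List.length_flatMap, List.Nat.antidiagonal, List.map_map]
  simp only [Function.comp_def, List.length_map]
  rfl

lemma lenAT : ∀ k n : ℕ, (List.Nat.antidiagonalTuple (k+1) n).length = (k + n).choose n := by
  intro k
  induction k with
  | zero => intro n; simp
  | succ k ih =>
    intro n
    rw [lenAT_step]
    simp only [ih]
    have hrefl := Finset.sum_range_reflect (fun j => (k + (n - j)).choose (n - j)) (n+1)
    simp only [Nat.add_sub_cancel] at hrefl
    rw [← hrefl]
    have h1 : ∀ i ∈ Finset.range (n+1), (k + (n - (n - i))).choose (n - (n - i)) = (k + i).choose k := by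
      intro i hi
      rw [Finset.mem_range] at hi
      have : n - (n - i) = i := by omega
      rw [this, ← Nat.choose_symm (by omega : k ≤ k + i)]
      congr 1
      omega
    rw [Finset.sum_congr rfl h1]
    have h2 : ∑ i ∈ Finset.range (n+1), (k + i).choose k = ∑ m ∈ Finset.Icc k (k+n), m.choose k := by
      rw [show Finset.Icc k (k+n) = Finset.Ico k (k+n+1) by rw [Finset.Ico_add_one_right_eq_Icc]]
      rw [Finset.sum_Ico_eq_sum_range]
      simp only [show k + n + 1 - k = n + 1 by omega]
    rw [h2, Nat.sum_Icc_choose]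
    have h3 := Nat.choose_symm (show k+1 ≤ k+1+n by omega)
    simp only [show k+1+n-(k+1) = n by omega] at h3
    rw [h3]
    congr 1
    omega

lemma cardAT (k n : ℕ) : (Finset.Nat.antidiagonalTuple (k+1) n).card = (k + n).choose n :=
  lenAT k n

/-- For integers `n ≥ 1`, `d ≥ 1` and real numbers `D i ≥ 1` with `D j > 1`
for at least one `j`, the set `{m ∈ ℕⁿ : ∑ mᵢ Dᵢ ≤ d}` is finite and its cardinality is at
most `C(n+d, n) − C(n+d−2, d−1)`. -/
theorem stmt_0 (n d : ℕ) (hn : 1 ≤ n) (hd : 1 ≤ d) (D : Fin n → ℝ)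
    (hD : ∀ i, 1 ≤ D i) (hj : ∃ j, 1 < D j) :
    {m : Fin n → ℕ | ∑ i, (m i : ℝ) * D i ≤ (d : ℝ)}.Finite ∧
    {m : Fin n → ℕ | ∑ i, (m i : ℝ) * D i ≤ (d : ℝ)}.ncard ≤
      (n + d).choose n - (n + d - 2).choose (d - 1) := by
  obtain ⟨j, hDj⟩ := hj
  set T : Finset (Fin n → ℕ) := (Finset.Nat.antidiagonalTuple (n+1) d).image Fin.tail with hTdef
  set E : Finset (Fin n → ℕ) :=
    (Finset.Nat.antidiagonalTuple n (d-1)).image (fun m => m + Pi.single j 1) with hEdef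
  -- membership in T
  have hTmem : ∀ m : Fin n → ℕ, m ∈ T ↔ ∑ i, m i ≤ d := by
    intro m
    constructor
    · rintro hm
      obtain ⟨x, hx, rfl⟩ := Finset.mem_image.mp hm
      rw [Finset.Nat.mem_antidiagonalTuple] at hx
      rw [Fin.sum_univ_succ] at hx
      have : ∑ i, Fin.tail x i = ∑ i : Fin n, x i.succ := rfl
      omega
    · intro hm
      refine Finset.mem_image.mpr ⟨Fin.cons (d - ∑ i, m i) m, ?_, ?_⟩
      · rw [Finset.Nat.mem_antidiagonalTuple, Fin.sum_univ_succ]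
        simp only [Fin.cons_zero, Fin.cons_succ]
        omega
      · exact Fin.tail_cons _ _
  -- cardinality of T
  have hcardT : T.card = (n + d).choose n := by
    rw [hTdef, Finset.card_image_of_injOn, cardAT]
    · rw [← Nat.choose_symm (by omega : n ≤ n + d)]
      congr 1
      omega
    · intro x hx y hy hxy
      simp only [Finset.mem_coe, Finset.Nat.mem_antidiagonalTuple, Fin.sum_univ_succ] at hx hy
      have hsum : ∑ i : Fin n, x i.succ = ∑ i : Fin n, y i.succ := by
        have : ∀ i : Fin n, x i.succ = y i.succ := fun i => congrFun hxy i
        exact Finset.sum_congr rfl fun i _ => this i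
      have h0 : x 0 = y 0 := by omega
      funext i
      refine Fin.cases h0 (fun i => congrFun hxy i) i
  -- membership in E
  have hEmem : ∀ m : Fin n → ℕ, m ∈ E → ∑ i, m i = d ∧ 1 ≤ m j := by
    intro m hm
    obtain ⟨x, hx, rfl⟩ := Finset.mem_image.mp hm
    rw [Finset.Nat.mem_antidiagonalTuple] at hx
    constructor
    · simp only [Pi.add_apply]
      rw [Finset.sum_add_distrib, hx, Finset.sum_pi_single']
      simp only [Finset.mem_univ, if_true]
      omega
    · simp [Pi.add_apply, Pi.single_eq_same]
  -- cardinality of E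
  have hcardE : E.card = (n + d - 2).choose (d - 1) := by
    rw [hEdef, Finset.card_image_of_injective _ (add_left_injective _)]
    obtain ⟨n', rfl⟩ : ∃ n', n = n' + 1 := ⟨n - 1, by omega⟩
    rw [cardAT]
    congr 1
    omega
  -- E ⊆ T
  have hET : E ⊆ T := by
    intro m hm
    rw [hTmem]
    exact (hEmem m hm).1.le
  -- S ⊆ T \ E
  have hsub : {m : Fin n → ℕ | ∑ i, (m i : ℝ) * D i ≤ (d : ℝ)} ⊆ ↑(T \ E) := by
    intro m hm
    simp only [Set.mem_setOf_eq] at hm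
    have hkey : (∑ i, (m i : ℕ) : ℝ) ≤ ∑ i, (m i : ℝ) * D i := by
      push_cast
      refine Finset.sum_le_sum fun i _ => ?_
      nlinarith [hD i, (m i).cast_nonneg (α := ℝ)]
    have hle : ∑ i, m i ≤ d := by
      have : ((∑ i, m i : ℕ) : ℝ) ≤ (d : ℝ) := by push_cast; exact le_trans hkey hm
      exact_mod_cast this
    rw [Finset.coe_sdiff, Set.mem_diff]
    refine ⟨(hTmem m).mpr hle, fun hmE => ?_⟩
    obtain ⟨hsum, hmj⟩ := hEmem m hmE
    -- derive contradiction
    have hsplit : ∑ i, (m i : ℝ) * D i = (∑ i, (m i : ℕ) : ℝ) + ∑ i, (m i : ℝ) * (D i - 1) := by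
      push_cast
      rw [← Finset.sum_add_distrib]
      refine Finset.sum_congr rfl fun i _ => by ring
    have hsingle : (m j : ℝ) * (D j - 1) ≤ ∑ i, (m i : ℝ) * (D i - 1) := by
      refine Finset.single_le_sum (f := fun i => (m i : ℝ) * (D i - 1)) (fun i _ => ?_) (Finset.mem_univ j)
      show (0:ℝ) ≤ (m i : ℝ) * (D i - 1)
      have h1 := hD i
      have h2 : (0:ℝ) ≤ (m i : ℝ) := (m i).cast_nonneg
      nlinarith
    have hmj' : (1 : ℝ) ≤ (m j : ℝ) := by exact_mod_cast hmj
    have hs2 : ∑ i, (m i : ℝ) = (d : ℝ) := by exact_mod_cast hsum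
    have hprod : (1:ℝ) * (D j - 1) ≤ (m j : ℝ) * (D j - 1) :=
      mul_le_mul_of_nonneg_right hmj' (le_of_lt (sub_pos.mpr hDj))
    have hsplit' : ∑ i, (m i : ℝ) * D i = (∑ i, (m i : ℝ)) + ∑ i, (m i : ℝ) * (D i - 1) := by
      rw [← Finset.sum_add_distrib]
      exact Finset.sum_congr rfl fun i _ => by ring
    linarith
  have hfinT : (↑(T \ E) : Set (Fin n → ℕ)).Finite := (T \ E).finite_toSet
  refine ⟨hfinT.subset hsub, ?_⟩
  calc {m : Fin n → ℕ | ∑ i, (m i : ℝ) * D i ≤ (d : ℝ)}.ncard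
      ≤ (↑(T \ E) : Set (Fin n → ℕ)).ncard := Set.ncard_le_ncard hsub hfinT
    _ = (T \ E).card := Set.ncard_coe_finset _
    _ = T.card - E.card := Finset.card_sdiff_of_subset hET
    _ = (n + d).choose n - (n + d - 2).choose (d - 1) := by rw [hcardT, hcardE]
end

section
/- Let n ≥ 1 and d ≥ 1 be integers, fix an index j ∈ {1, …, n}, and let d₁, …, dₙ be real numbers with dᵢ = 1 for every i ≠ j, with d_j > 1, and with (d−1)·d_j < d. Then the cardinality of {(m₁, …, mₙ) ∈ ℕⁿ : m₁d₁ + ⋯ + mₙdₙ ≤ d} equals exactly C(n+d, n) − C(n+d−2, d−1), where C(·,·) denotes the binomial coefficient. -/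
theorem aux_card_eq (n k : ℕ) :
    Nat.card {m : Fin n → ℕ // ∑ i, m i = k} = (n + k - 1).choose k := by
  classical
  have key : ∀ s : Multiset (Fin n),
      Finsupp.toMultiset (Finsupp.equivFunOnFinite.symm fun i => Multiset.count i s) = s := by
    intro s
    rw [show (Finsupp.equivFunOnFinite.symm fun i => Multiset.count i s)
        = Multiset.toFinsupp s from Finsupp.ext fun a => by simp,
      Multiset.toFinsupp_toMultiset]
  have e : {m : Fin n → ℕ // ∑ i, m i = k} ≃ Sym (Fin n) k := by
    refine ⟨fun m => ⟨Finsupp.toMultiset (Finsupp.equivFunOnFinite.symm m.1), ?_⟩,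
      fun s => ⟨fun i => Multiset.count i s.1, ?_⟩, ?_, ?_⟩
    · simp [Finsupp.card_toMultiset, Finsupp.sum_fintype, m.2]
    · obtain ⟨s, hs⟩ := s
      simp only [← hs, ← Multiset.toFinset_sum_count_eq]
      exact (Finset.sum_subset (Finset.subset_univ _)
        (fun x _ hx => by simpa [Multiset.count_eq_zero] using hx)).symm
    · intro m; ext i; simp
    · intro s; exact Subtype.ext (key s.1)
  rw [Nat.card_congr e, Nat.card_eq_fintype_card, Sym.card_sym_eq_choose, Fintype.card_fin]

theorem aux_card_le (n d : ℕ) :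
    Nat.card {m : Fin n → ℕ // ∑ i, m i ≤ d} = (n + d).choose n := by
  have e : {m : Fin (n+1) → ℕ // ∑ i, m i = d} ≃ {m : Fin n → ℕ // ∑ i, m i ≤ d} := by
    refine ⟨fun m => ⟨fun i => m.1 i.castSucc, ?_⟩,
      fun m => ⟨Fin.snoc m.1 (d - ∑ i, m.1 i), ?_⟩, ?_, ?_⟩
    · have h2 := m.2
      rw [Fin.sum_univ_castSucc] at h2
      exact le_trans (Nat.le_add_right _ _) h2.le
    · rw [Fin.sum_univ_castSucc]
      simp only [Fin.snoc_castSucc, Fin.snoc_last]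
      omega
    · intro m
      have hm := m.2
      rw [Fin.sum_univ_castSucc] at hm
      apply Subtype.ext
      funext i
      induction i using Fin.lastCases with
      | last => simp only [Fin.snoc_last]; omega
      | cast i => simp
    · intro m
      apply Subtype.ext
      funext i
      simp
  rw [← Nat.card_congr e, aux_card_eq (n+1) d]
  have h : n + 1 + d - 1 = n + d := by omega
  rw [h, Nat.choose_symm_add]

theorem aux_card_shift (n d : ℕ) (hd : 1 ≤ d) (j : Fin n) :
    Nat.card {m : Fin n → ℕ // ∑ i, m i = d ∧ 1 ≤ m j}
      = Nat.card {m : Fin n → ℕ // ∑ i, m i = d - 1} := by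
  classical
  have fwd : ∀ m : Fin n → ℕ, ∑ i, m i = d → 1 ≤ m j →
      ∑ i, Function.update m j (m j - 1) i = d - 1 := by
    intro m hm hmj
    rw [Finset.sum_update_of_mem (Finset.mem_univ j),
      Finset.sdiff_singleton_eq_erase]
    rw [← Finset.add_sum_erase _ _ (Finset.mem_univ j)] at hm
    omega
  have bwd1 : ∀ m : Fin n → ℕ, ∑ i, m i = d - 1 →
      ∑ i, Function.update m j (m j + 1) i = d := by
    intro m hm
    rw [Finset.sum_update_of_mem (Finset.mem_univ j),
      Finset.sdiff_singleton_eq_erase]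
    rw [← Finset.add_sum_erase _ _ (Finset.mem_univ j)] at hm
    omega
  refine Nat.card_congr ⟨fun x => ⟨Function.update x.1 j (x.1 j - 1), fwd x.1 x.2.1 x.2.2⟩,
    fun x => ⟨Function.update x.1 j (x.1 j + 1), bwd1 x.1 x.2, by simp⟩, ?_, ?_⟩
  · intro x
    apply Subtype.ext
    funext i
    rcases eq_or_ne i j with rfl | h
    · simp only [Function.update_self]
      have := x.2.2
      omega
    · simp [Function.update_of_ne h]
  · intro x
    apply Subtype.ext
    funext i
    rcases eq_or_ne i j with rfl | h
    · simp
    · simp [Function.update_of_ne h]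

/-- For integers `n ≥ 1`, `d ≥ 1`, an index `j`, and real numbers with
`D i = 1` for `i ≠ j`, `D j > 1` and `(d−1)·D j < d`, the set `{m ∈ ℕⁿ : ∑ mᵢ Dᵢ ≤ d}`
is finite and its cardinality equals exactly `C(n+d, n) − C(n+d−2, d−1)`. -/
theorem stmt_1 (n d : ℕ) (hn : 1 ≤ n) (hd : 1 ≤ d) (j : Fin n) (D : Fin n → ℝ)
    (hD : ∀ i, i ≠ j → D i = 1) (hj : 1 < D j) (hdj : ((d : ℝ) - 1) * D j < (d : ℝ)) :
    {m : Fin n → ℕ | ∑ i, (m i : ℝ) * D i ≤ (d : ℝ)}.Finite ∧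
    {m : Fin n → ℕ | ∑ i, (m i : ℝ) * D i ≤ (d : ℝ)}.ncard =
      (n + d).choose n - (n + d - 2).choose (d - 1) := by
  have key : ∀ m : Fin n → ℕ,
      ∑ i, (m i : ℝ) * D i = ((∑ i, m i : ℕ) : ℝ) + (m j : ℝ) * (D j - 1) := by
    intro m
    have h1 : ∑ i, ((m i : ℝ) * D i - (m i : ℝ)) = (m j : ℝ) * D j - (m j : ℝ) :=
      Finset.sum_eq_single_of_mem j (Finset.mem_univ j)
        (fun i _ hi => by rw [hD i hi]; ring)
    have h2 : ∑ i, ((m i : ℝ) * D i - (m i : ℝ))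
        = ∑ i, (m i : ℝ) * D i - ∑ i, (m i : ℝ) := Finset.sum_sub_distrib _ _
    push_cast
    rw [h2] at h1
    linarith
  have hset : {m : Fin n → ℕ | ∑ i, (m i : ℝ) * D i ≤ (d : ℝ)}
      = {m : Fin n → ℕ | ∑ i, m i ≤ d} \ {m : Fin n → ℕ | ∑ i, m i = d ∧ 1 ≤ m j} := by
    ext m
    simp only [Set.mem_setOf_eq, Set.mem_diff, key m]
    constructor
    · intro h
      have hjm : (0 : ℝ) ≤ (m j : ℝ) * (D j - 1) :=
        mul_nonneg (Nat.cast_nonneg _) (by linarith)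
      have hle : ((∑ i, m i : ℕ) : ℝ) ≤ (d : ℝ) := by linarith
      have hle' : ∑ i, m i ≤ d := Nat.cast_le.mp hle
      refine ⟨hle', ?_⟩
      rintro ⟨hsum, hmj⟩
      have h1 : (1 : ℝ) ≤ (m j : ℝ) := by exact_mod_cast hmj
      have : (0 : ℝ) < (m j : ℝ) * (D j - 1) :=
        mul_pos (by linarith) (by linarith)
      rw [hsum] at h
      linarith
    · rintro ⟨hle, hne⟩
      rcases Nat.eq_zero_or_pos (m j) with hz | hpos
      · rw [hz]
        push_cast
        rw [zero_mul, add_zero]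
        exact_mod_cast hle
      · have hlt : ∑ i, m i ≤ d - 1 := by
          rcases Nat.lt_or_ge (∑ i, m i) d with h | h
          · omega
          · exact absurd ⟨le_antisymm hle h, hpos⟩ hne
        have hjm : m j ≤ ∑ i, m i :=
          Finset.single_le_sum (fun i _ => Nat.zero_le _) (Finset.mem_univ j)
        have hjd : (m j : ℝ) ≤ (d : ℝ) - 1 := by
          have h' : m j ≤ d - 1 := le_trans hjm hlt
          have h'' := (Nat.cast_le (α := ℝ)).mpr h'
          rw [Nat.cast_sub hd] at h''
          simpa using h''
        have hS : ((∑ i, m i : ℕ) : ℝ) ≤ (d : ℝ) - 1 := by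
          have h'' := (Nat.cast_le (α := ℝ)).mpr hlt
          rw [Nat.cast_sub hd] at h''
          simpa using h''
        have e1 : (m j : ℝ) * (D j - 1) ≤ ((d : ℝ) - 1) * (D j - 1) :=
          mul_le_mul_of_nonneg_right hjd (by linarith)
        nlinarith [e1, hS, hdj]
  have hBfin : {m : Fin n → ℕ | ∑ i, m i ≤ d}.Finite := by
    apply Set.Finite.subset (Set.Finite.pi (fun _ : Fin n => Set.finite_Iic d))
    intro m hm
    simp only [Set.mem_pi, Set.mem_univ, Set.mem_Iic, forall_true_left]
    intro i
    exact le_trans (Finset.single_le_sum (fun i _ => Nat.zero_le _) (Finset.mem_univ i)) hm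
  have hsub : {m : Fin n → ℕ | ∑ i, m i = d ∧ 1 ≤ m j}
      ⊆ {m : Fin n → ℕ | ∑ i, m i ≤ d} := fun m hm => hm.1.le
  constructor
  · rw [hset]; exact hBfin.diff
  · rw [hset, Set.ncard_diff hsub (hBfin.subset hsub)]
    have hB : {m : Fin n → ℕ | ∑ i, m i ≤ d}.ncard = (n + d).choose n := aux_card_le n d
    have hR : {m : Fin n → ℕ | ∑ i, m i = d ∧ 1 ≤ m j}.ncard
        = (n + d - 2).choose (d - 1) := by
      have h2 : n + (d - 1) - 1 = n + d - 2 := by clear hB hsub hBfin hset key hD; omega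
      calc Set.ncard {m : Fin n → ℕ | ∑ i, m i = d ∧ 1 ≤ m j}
          = Nat.card {m : Fin n → ℕ // ∑ i, m i = d - 1} := aux_card_shift n d hd j
        _ = (n + (d - 1) - 1).choose (d - 1) := aux_card_eq n (d - 1)
        _ = (n + d - 2).choose (d - 1) := by rw [h2]
    rw [hB, hR]
end

section
/- Fix an integer n ≥ 1 and real weights w₁, …, wₙ > 0, and let r be a weighted radial function for these weights. Then the link {z ∈ ℂⁿ \ {0} : r(z) = 1}, with its subspace topology, is homeomorphic to the Euclidean unit sphere S^{2n−1} ⊂ ℂⁿ. -/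
open Filter

/-- The weighted scaling action of `t ∈ (0,∞)` on `ℂⁿ` with real weights `w`:
`(t • z)ᵢ = t^{wᵢ} zᵢ`, where `t^{wᵢ}` is the real power. -/
noncomputable def wsmul {n : ℕ} (w : Fin n → ℝ) (t : ℝ) (z : EuclideanSpace ℂ (Fin n)) :
    EuclideanSpace ℂ (Fin n) :=
  WithLp.toLp 2 (fun i => ((t ^ (w i) : ℝ) : ℂ) * z i)

namespace Stmt8
variable {n : ℕ} {w : Fin n → ℝ}

lemma wsmul_one (z : EuclideanSpace ℂ (Fin n)) : wsmul w 1 z = z := by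
  ext i; simp [wsmul]

lemma wsmul_wsmul {s t : ℝ} (hs : 0 ≤ s) (ht : 0 ≤ t) (z : EuclideanSpace ℂ (Fin n)) :
    wsmul w s (wsmul w t z) = wsmul w (s * t) z := by
  ext i
  simp only [wsmul, PiLp.toLp_apply, Real.mul_rpow hs ht]
  push_cast; ring

lemma exists_ne_zero {z : EuclideanSpace ℂ (Fin n)} (hz : z ≠ 0) : ∃ i, z i ≠ 0 := by
  by_contra h; push_neg at h; exact hz (by ext i; simp [h])

lemma wsmul_ne_zero {t : ℝ} (ht : 0 < t) {z : EuclideanSpace ℂ (Fin n)} (hz : z ≠ 0) :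
    wsmul w t z ≠ 0 := by
  obtain ⟨i, hi⟩ := exists_ne_zero hz
  intro h
  have : (wsmul w t z) i = 0 := by rw [h]; rfl
  simp only [wsmul, PiLp.toLp_apply] at this
  rcases mul_eq_zero.mp this with h' | h'
  · exact absurd (by exact_mod_cast h') (Real.rpow_pos_of_pos ht (w i)).ne'
  · exact hi h'

lemma norm_wsmul {t : ℝ} (ht : 0 < t) (z : EuclideanSpace ℂ (Fin n)) :
    ‖wsmul w t z‖ = Real.sqrt (∑ i, (t ^ (w i) * ‖z i‖) ^ 2) := by
  rw [EuclideanSpace.norm_eq]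
  congr 1
  refine Finset.sum_congr rfl fun i _ => ?_
  have : ‖(wsmul w t z) i‖ = t ^ (w i) * ‖z i‖ := by
    simp only [wsmul, PiLp.toLp_apply, norm_mul]
    congr 1
    simp [abs_of_pos (Real.rpow_pos_of_pos ht (w i))]
  rw [this]

lemma strictMono_norm_wsmul (hw : ∀ i, 0 < w i) {z : EuclideanSpace ℂ (Fin n)} (hz : z ≠ 0) :
    StrictMonoOn (fun t => ‖wsmul w t z‖) (Set.Ioi 0) := by
  intro s hs t ht hst
  simp only [Set.mem_Ioi] at hs ht
  obtain ⟨j, hj⟩ := exists_ne_zero hz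
  simp only [norm_wsmul hs, norm_wsmul ht]
  apply Real.sqrt_lt_sqrt
  · positivity
  · apply Finset.sum_lt_sum
    · intro i _
      have h1 : s ^ (w i) ≤ t ^ (w i) := Real.rpow_le_rpow hs.le hst.le (hw i).le
      have h2 : (0:ℝ) ≤ s ^ (w i) * ‖z i‖ := by positivity
      exact pow_le_pow_left₀ h2 (mul_le_mul_of_nonneg_right h1 (norm_nonneg _)) 2
    · refine ⟨j, Finset.mem_univ j, ?_⟩
      have h1 : s ^ (w j) < t ^ (w j) := Real.rpow_lt_rpow hs.le hst (hw j)
      have hzj : 0 < ‖z j‖ := norm_pos_iff.mpr hj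
      have h2 : (0:ℝ) ≤ s ^ (w j) * ‖z j‖ := by positivity
      exact pow_lt_pow_left₀ (mul_lt_mul_of_pos_right h1 hzj) h2 two_ne_zero

lemma exists_norm_wsmul_eq_one (hw : ∀ i, 0 < w i) {z : EuclideanSpace ℂ (Fin n)}
    (hz : z ≠ 0) : ∃ s : ℝ, 0 < s ∧ ‖wsmul w s z‖ = 1 := by
  obtain ⟨j, hj⟩ := exists_ne_zero hz
  set φ : ℝ → ℝ := fun t => Real.sqrt (∑ i, (t ^ (w i) * ‖z i‖) ^ 2) with hφ
  have hcont : ContinuousOn φ (Set.Ioi 0) := by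
    apply Real.continuous_sqrt.comp_continuousOn
    apply continuousOn_finset_sum
    intro i _
    apply ContinuousOn.pow
    apply ContinuousOn.mul _ continuousOn_const
    intro x hx
    exact (Real.continuousAt_rpow_const x (w i) (Or.inl (ne_of_gt hx))).continuousWithinAt
  -- behaviour at infinity
  have hbig : ∀ t, 0 < t → t ^ (w j) * ‖z j‖ ≤ φ t := by
    intro t ht
    have : (t ^ (w j) * ‖z j‖) ^ 2 ≤ ∑ i, (t ^ (w i) * ‖z i‖) ^ 2 :=
      Finset.single_le_sum (f := fun i => (t ^ (w i) * ‖z i‖) ^ 2)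
        (fun i _ => by positivity) (Finset.mem_univ j)
    calc t ^ (w j) * ‖z j‖ = Real.sqrt ((t ^ (w j) * ‖z j‖) ^ 2) :=
          (Real.sqrt_sq (by positivity)).symm
      _ ≤ φ t := Real.sqrt_le_sqrt this
  have hzj : 0 < ‖z j‖ := norm_pos_iff.mpr hj
  have htop : Tendsto (fun t : ℝ => t ^ (w j) * ‖z j‖) atTop atTop :=
    (tendsto_rpow_atTop (hw j)).atTop_mul_const hzj
  obtain ⟨b, hb⟩ := ((htop.eventually_ge_atTop 1).and (eventually_ge_atTop 1)).exists
  have hb0 : (0:ℝ) < b := lt_of_lt_of_le one_pos hb.2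
  have hφb : 1 ≤ φ b := le_trans hb.1 (hbig b hb0)
  -- behaviour at 0⁺
  have h0 : Tendsto φ (nhdsWithin 0 (Set.Ioi 0)) (nhds 0) := by
    have : Tendsto φ (nhds 0) (nhds (φ 0)) := by
      apply Continuous.tendsto
      apply Real.continuous_sqrt.comp
      apply continuous_finset_sum
      intro i _
      exact ((Real.continuousAt_rpow_const · (w i) (Or.inr (hw i).le)) |>
        continuous_iff_continuousAt.mpr).mul continuous_const |>.pow 2
    have hφ0 : φ 0 = 0 := by
      simp [hφ, Real.zero_rpow (ne_of_gt (hw _))]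
    rw [hφ0] at this
    exact this.mono_left nhdsWithin_le_nhds
  have h1 : ∀ᶠ t in nhdsWithin 0 (Set.Ioi 0), φ t < 1 :=
    h0.eventually_lt_const one_pos
  have h2 : ∀ᶠ t in nhdsWithin 0 (Set.Ioi 0), t < b :=
    eventually_nhdsWithin_of_eventually_nhds (eventually_lt_nhds hb0)
  have h3 : ∀ᶠ t : ℝ in nhdsWithin 0 (Set.Ioi 0), 0 < t := eventually_mem_nhdsWithin
  obtain ⟨a, ⟨ha1, ha2⟩, ha3⟩ := ((h1.and h2).and h3).exists
  -- IVT on [a, b]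
  have hsub : Set.Icc a b ⊆ Set.Ioi 0 := fun x hx => lt_of_lt_of_le ha3 hx.1
  have := intermediate_value_Icc (le_of_lt ha2) (hcont.mono hsub)
  have h1mem : (1:ℝ) ∈ Set.Icc (φ a) (φ b) := ⟨ha1.le, hφb⟩
  obtain ⟨s, hs, hφs⟩ := this h1mem
  refine ⟨s, lt_of_lt_of_le ha3 hs.1, ?_⟩
  rw [norm_wsmul (lt_of_lt_of_le ha3 hs.1)]
  exact hφs

end Stmt8

open Stmt8 in
/-- For a weighted radial function `r` (continuous on `ℂⁿ \ {0}`, positive,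
and homogeneous of degree 1 for the weighted scaling action), the link
`{z ∈ ℂⁿ \ {0} : r(z) = 1}`, with its subspace topology, is homeomorphic to the Euclidean
unit sphere `S^{2n−1} ⊂ ℂⁿ`. -/
theorem stmt_8 (n : ℕ) (hn : 1 ≤ n) (w : Fin n → ℝ) (hw : ∀ i, 0 < w i)
    (r : EuclideanSpace ℂ (Fin n) → ℝ)
    (hr_cont : ContinuousOn r ({0}ᶜ : Set (EuclideanSpace ℂ (Fin n))))
    (hr_pos : ∀ z : EuclideanSpace ℂ (Fin n), z ≠ 0 → 0 < r z)
    (hr_hom : ∀ t : ℝ, 0 < t → ∀ z : EuclideanSpace ℂ (Fin n), z ≠ 0 →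
      r (wsmul w t z) = t * r z) :
    Nonempty ({z : EuclideanSpace ℂ (Fin n) // z ≠ 0 ∧ r z = 1} ≃ₜ
      (Metric.sphere (0 : EuclideanSpace ℂ (Fin n)) 1)) := by
  -- points on the sphere are nonzero
  have hsne : ∀ z : Metric.sphere (0 : EuclideanSpace ℂ (Fin n)) 1,
      (z : EuclideanSpace ℂ (Fin n)) ≠ 0 := by
    intro z
    have := z.2
    rw [mem_sphere_zero_iff_norm] at this
    intro h
    rw [h] at this
    simp at this
  -- the map from the sphere to the link
  set g : Metric.sphere (0 : EuclideanSpace ℂ (Fin n)) 1 →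
      {z : EuclideanSpace ℂ (Fin n) // z ≠ 0 ∧ r z = 1} := fun z =>
    ⟨wsmul w ((r z.val)⁻¹) z.val, by
      have hz := hsne z
      have hrz : 0 < r z.val := hr_pos _ hz
      have hinv : 0 < (r z.val)⁻¹ := inv_pos.mpr hrz
      refine ⟨wsmul_ne_zero hinv hz, ?_⟩
      rw [hr_hom _ hinv _ hz, inv_mul_cancel₀ hrz.ne']⟩ with hg
  -- g is injective
  have hginj : Function.Injective g := by
    intro z₁ z₂ h
    have hz₁ := hsne z₁
    have hz₂ := hsne z₂
    have hr₁ : 0 < r z₁.val := hr_pos _ hz₁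
    have hr₂ : 0 < r z₂.val := hr_pos _ hz₂
    have heq : wsmul w ((r z₁.val)⁻¹) z₁.val = wsmul w ((r z₂.val)⁻¹) z₂.val :=
      congrArg Subtype.val h
    have h2 : z₁.val = wsmul w (r z₁.val * (r z₂.val)⁻¹) z₂.val := by
      have := congrArg (wsmul w (r z₁.val)) heq
      rwa [wsmul_wsmul hr₁.le (inv_pos.mpr hr₁).le, mul_inv_cancel₀ hr₁.ne',
        wsmul_one, wsmul_wsmul hr₁.le (inv_pos.mpr hr₂).le] at this
    have hc : 0 < r z₁.val * (r z₂.val)⁻¹ := by positivity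
    have hn₁ : ‖z₁.val‖ = 1 := mem_sphere_zero_iff_norm.mp z₁.2
    have hn₂ : ‖z₂.val‖ = 1 := mem_sphere_zero_iff_norm.mp z₂.2
    have hkey : ‖wsmul w (r z₁.val * (r z₂.val)⁻¹) z₂.val‖ = ‖wsmul w 1 z₂.val‖ := by
      rw [wsmul_one, ← h2, hn₁, hn₂]
    have := (strictMono_norm_wsmul hw hz₂).injOn hc (Set.mem_Ioi.mpr one_pos) hkey
    apply Subtype.ext
    rw [h2, this, wsmul_one]
  -- g is surjective
  have hgsurj : Function.Surjective g := by
    rintro ⟨z, hz, hrz⟩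
    obtain ⟨s, hs, hns⟩ := exists_norm_wsmul_eq_one hw hz
    refine ⟨⟨wsmul w s z, mem_sphere_zero_iff_norm.mpr hns⟩, ?_⟩
    apply Subtype.ext
    show wsmul w ((r (wsmul w s z))⁻¹) (wsmul w s z) = z
    rw [hr_hom _ hs _ hz, hrz, mul_one,
      wsmul_wsmul (inv_pos.mpr hs).le hs.le, inv_mul_cancel₀ hs.ne', wsmul_one]
  -- g is continuous
  have hgcont : Continuous g := by
    apply Continuous.subtype_mk
    have hrc : Continuous fun z : Metric.sphere (0 : EuclideanSpace ℂ (Fin n)) 1 => r z.val :=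
      hr_cont.comp_continuous continuous_subtype_val (fun z => hsne z)
    have hrinv : Continuous fun z : Metric.sphere (0 : EuclideanSpace ℂ (Fin n)) 1 =>
        (r z.val)⁻¹ := hrc.inv₀ (fun z => (hr_pos _ (hsne z)).ne')
    apply (PiLp.continuous_toLp _ _).comp
    apply continuous_pi
    intro i
    exact ((Complex.continuous_ofReal.comp
        (hrinv.rpow_const (fun z => Or.inl (inv_ne_zero (hr_pos _ (hsne z)).ne')))).mul
      ((PiLp.continuous_apply 2 _ i).comp continuous_subtype_val))
  exact ⟨(Continuous.homeoOfEquivCompactToT2 (f := Equiv.ofBijective g ⟨hginj, hgsurj⟩)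
    hgcont).symm⟩
end
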